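/- arXiv:1302.6583 — 2 statements merged into one kernel-verified Lean document; each statement's English description precedes it below -/
import Mathlib

section
/- Define V(h) = ∑_{k=0}^{h} ∑_{i=0}^{h-k} C(k, h-k-i). Then V satisfies V(0) = 1, V(1) = 2, and V(h) = V(h-1) + V(h-2) + 1 for all h ≥ 2. -/
def V (h : ℕ) : ℕ := ∑ k ∈ Finset.range (h + 1), ∑ i ∈ Finset.range (h - k + 1), Nat.choose k (h - k - i)

lemma tri_reindex (f : ℕ → ℕ → ℕ) : ∀ n : ℕ,
    ∑ k ∈ Finset.range (n + 1), ∑ j ∈ Finset.range (n + 1 - k), f k j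
      = ∑ m ∈ Finset.range (n + 1), ∑ k ∈ Finset.range (m + 1), f k (m - k) := by
  intro n
  induction n with
  | zero => simp
  | succ n ih =>
    rw [Finset.sum_range_succ (fun m => ∑ k ∈ Finset.range (m + 1), f k (m - k)), ← ih]
    have h1 : ∀ k ∈ Finset.range (n + 2),
        ∑ j ∈ Finset.range (n + 2 - k), f k j
          = (∑ j ∈ Finset.range (n + 1 - k), f k j) + f k (n + 1 - k) := by
      intro k hk
      have hk' : k ≤ n + 1 := Nat.lt_succ_iff.mp (Finset.mem_range.mp hk)
      have : n + 2 - k = (n + 1 - k) + 1 := by omega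
      rw [this, Finset.sum_range_succ]
    rw [Finset.sum_congr rfl h1, Finset.sum_add_distrib, Finset.sum_range_succ
      (fun k => ∑ j ∈ Finset.range (n + 1 - k), f k j)]
    simp [add_assoc]
lemma V_eq_fib (h : ℕ) : V h + 1 = Nat.fib (h + 3) := by
  have inner : ∀ k, ∑ i ∈ Finset.range (h - k + 1), Nat.choose k (h - k - i)
      = ∑ j ∈ Finset.range (h - k + 1), Nat.choose k j := by
    intro k
    have := Finset.sum_range_reflect (fun j => Nat.choose k j) (h - k + 1)
    simpa using this
  have hV : V h = ∑ m ∈ Finset.range (h + 1), Nat.fib (m + 1) := by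
    unfold V
    calc ∑ k ∈ Finset.range (h + 1), ∑ i ∈ Finset.range (h - k + 1), Nat.choose k (h - k - i)
        = ∑ k ∈ Finset.range (h + 1), ∑ j ∈ Finset.range (h + 1 - k), Nat.choose k j := by
          refine Finset.sum_congr rfl fun k hk => ?_
          have : k ≤ h := Nat.lt_succ_iff.mp (Finset.mem_range.mp hk)
          rw [inner k, show h - k + 1 = h + 1 - k from by omega]
      _ = ∑ m ∈ Finset.range (h + 1), ∑ k ∈ Finset.range (m + 1), Nat.choose k (m - k) :=
          tri_reindex _ h
      _ = ∑ m ∈ Finset.range (h + 1), Nat.fib (m + 1) := by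
          refine Finset.sum_congr rfl fun m _ => ?_
          rw [Nat.fib_succ_eq_sum_choose, Finset.Nat.sum_antidiagonal_eq_sum_range_succ_mk]
  have hsum : ∑ m ∈ Finset.range (h + 1), Nat.fib (m + 1)
      = ∑ m ∈ Finset.range (h + 2), Nat.fib m := by
    rw [Finset.sum_range_succ' (fun m => Nat.fib m) (h + 1)]
    simp
  rw [hV, hsum, ← Nat.fib_succ_eq_succ_sum]

theorem fib_tree_vertex_recurrence :
    V 0 = 1 ∧ V 1 = 2 ∧ ∀ h, 2 ≤ h → V h = V (h - 1) + V (h - 2) + 1 := by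
  refine ⟨by decide, by decide, fun h hh => ?_⟩
  obtain ⟨n, rfl⟩ : ∃ n, h = n + 2 := ⟨h - 2, by omega⟩
  have e1 := V_eq_fib (n + 2)
  have e2 := V_eq_fib (n + 1)
  have e3 := V_eq_fib n
  have : Nat.fib (n + 2 + 3) = Nat.fib (n + 1 + 3) + Nat.fib (n + 3) := by
    rw [show n + 2 + 3 = (n + 3) + 2 by ring, Nat.fib_add_two]
    ring_nf
  simp only [show n + 2 - 1 = n + 1 by omega, show n + 2 - 2 = n by omega]
  omega
end

section
/- Let f be the Fibonacci sequence with f(0)=1 and f(1)=1. Then for every n ≥ 2, f(n) = 1 + ∑_{k=0}^{n-2} ∑_{i=0}^{n-k-2} C(k, n-k-i-2). -/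
lemma diag_sum (m : ℕ) :
    ∑ k ∈ Finset.range (m + 1), Nat.choose k (m - k) = Nat.fib (m + 1) := by
  rw [Nat.fib_succ_eq_sum_choose, Finset.Nat.sum_antidiagonal_eq_sum_range_succ_mk]

lemma tri_sum (N : ℕ) :
    Nat.fib (N + 3) =
      1 + ∑ k ∈ Finset.range (N + 1), ∑ j ∈ Finset.range (N - k + 1),
        Nat.choose k j := by
  induction N with
  | zero => decide
  | succ N ih =>
    have step : ∑ k ∈ Finset.range (N + 1 + 1), ∑ j ∈ Finset.range (N + 1 - k + 1),
          Nat.choose k j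
        = (∑ k ∈ Finset.range (N + 1), ∑ j ∈ Finset.range (N - k + 1), Nat.choose k j)
          + ∑ k ∈ Finset.range (N + 1 + 1), Nat.choose k (N + 1 - k) := by
      rw [Finset.sum_range_succ]
      have h1 : ∀ k ∈ Finset.range (N + 1),
          ∑ j ∈ Finset.range (N + 1 - k + 1), Nat.choose k j
            = (∑ j ∈ Finset.range (N - k + 1), Nat.choose k j)
              + Nat.choose k (N + 1 - k) := by
        intro k hk
        have hk' : k ≤ N := Nat.lt_succ_iff.mp (Finset.mem_range.mp hk)
        have : N + 1 - k = (N - k) + 1 := by omega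
        rw [this, Finset.sum_range_succ]
      have hb : ∑ k ∈ Finset.range (N + 1 + 1), Nat.choose k (N + 1 - k)
          = (∑ k ∈ Finset.range (N + 1), Nat.choose k (N + 1 - k)) + 1 := by
        rw [Finset.sum_range_succ, Nat.sub_self, Nat.choose_zero_right]
      rw [Finset.sum_congr rfl h1, Finset.sum_add_distrib, hb]
      simp [Nat.sub_self]
      omega
    rw [step, diag_sum]
    have h4 : Nat.fib (N + 1 + 3) = Nat.fib (N + 1 + 1) + Nat.fib (N + 3) := by
      rw [show N + 1 + 3 = (N + 1 + 1) + 2 by ring, Nat.fib_add_two,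
        show N + 1 + 1 + 1 = N + 3 by ring]
    rw [h4]
    omega

theorem fib_closed_form (n : ℕ) (hn : 2 ≤ n) :
    Nat.fib (n + 1) =
      1 + ∑ k ∈ Finset.range (n - 2 + 1), ∑ i ∈ Finset.range (n - k - 2 + 1),
        Nat.choose k (n - k - i - 2) := by
  obtain ⟨N, rfl⟩ : ∃ N, n = N + 2 := ⟨n - 2, by omega⟩
  have hr : ∀ k ∈ Finset.range (N + 1),
      ∑ i ∈ Finset.range (N + 2 - k - 2 + 1), Nat.choose k (N + 2 - k - i - 2)
        = ∑ j ∈ Finset.range (N - k + 1), Nat.choose k j := by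
    intro k hk
    have hk' : k ≤ N := Nat.lt_succ_iff.mp (Finset.mem_range.mp hk)
    have h2 : N + 2 - k - 2 = N - k := by omega
    rw [h2]
    rw [← Finset.sum_range_reflect (fun j => Nat.choose k j) (N - k + 1)]
    apply Finset.sum_congr rfl
    intro i hi
    have hi' : i ≤ N - k := Nat.lt_succ_iff.mp (Finset.mem_range.mp hi)
    congr 1
    omega
  have h3 : N + 2 - 2 = N := by omega
  rw [h3, Finset.sum_congr rfl hr]
  have : N + 2 + 1 = N + 3 := by ring
  rw [this, tri_sum]
end
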